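/- arXiv:1011.6324 — 3 statements merged into one kernel-verified Lean document; each statement's English description precedes it below -/
import Mathlib

section
/- For positive definite matrices A, B, positive semidefinite matrices C, D, and a Hermitian matrix X: Tr(X A⁻¹ X B⁻¹) − Tr(X (A+C)⁻¹ X (B+D)⁻¹) ≥ 0. -/
open Matrix ComplexOrder

private lemma psd_trace_nonneg {n : ℕ} {M : Matrix (Fin n) (Fin n) ℂ}
    (hM : M.PosSemidef) : 0 ≤ M.trace := by
  rw [Matrix.trace]
  apply Finset.sum_nonneg
  intro i _
  exact hM.diag_nonneg

open scoped MatrixOrder in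
private lemma trace_mul_nonneg {n : ℕ} {M N : Matrix (Fin n) (Fin n) ℂ}
    (hM : M.PosSemidef) (hN : N.PosSemidef) : 0 ≤ (M * N).trace := by
  have h1 : M * N = M * ((CFC.sqrt N) * (CFC.sqrt N)) := by rw [CFC.sqrt_mul_sqrt_self N hN.nonneg]
  have h2 : (M * ((CFC.sqrt N) * (CFC.sqrt N))).trace = ((CFC.sqrt N) * M * (CFC.sqrt N)).trace := by
    rw [← Matrix.mul_assoc, Matrix.trace_mul_cycle]
  have h3 : ((CFC.sqrt N) * M * (CFC.sqrt N)).PosSemidef := by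
    have := hM.conjTranspose_mul_mul_same (CFC.sqrt N)
    rwa [(CFC.sqrt_nonneg N).posSemidef.isHermitian.eq] at this
  rw [h1, h2]
  exact psd_trace_nonneg h3

private lemma inv_sub_inv_psd {n : ℕ} {A C : Matrix (Fin n) (Fin n) ℂ}
    (hA : A.PosDef) (hC : C.PosSemidef) :
    (A⁻¹ - (A + C)⁻¹).PosSemidef := by
  have hAC : (A + C).PosDef := hA.add_posSemidef hC
  have hAd : IsUnit A.det := (Matrix.isUnit_iff_isUnit_det _).mp hA.isUnit
  have hACd : IsUnit (A + C).det := (Matrix.isUnit_iff_isUnit_det _).mp hAC.isUnit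
  have hAir : A * A⁻¹ = 1 := Matrix.mul_nonsing_inv _ hAd
  have hAil : A⁻¹ * A = 1 := Matrix.nonsing_inv_mul _ hAd
  have hACr : (A + C) * (A + C)⁻¹ = 1 := Matrix.mul_nonsing_inv _ hACd
  have hACl : (A + C)⁻¹ * (A + C) = 1 := Matrix.nonsing_inv_mul _ hACd
  have key : A⁻¹ - (A + C)⁻¹ = (A + C)⁻¹ * (C + C * A⁻¹ * C) * (A + C)⁻¹ := by
    have h1 : C + C * A⁻¹ * C = C * A⁻¹ * (A + C) := by
      rw [Matrix.mul_add, Matrix.mul_assoc C A⁻¹ A, hAil, Matrix.mul_one]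
    have h2 : (A + C)⁻¹ * (C * A⁻¹ * (A + C)) * (A + C)⁻¹ = (A + C)⁻¹ * (C * A⁻¹) := by
      rw [Matrix.mul_assoc, Matrix.mul_assoc (C * A⁻¹), hACr, Matrix.mul_one]
    have h3 : (A + C) * (A⁻¹ - (A + C)⁻¹) = C * A⁻¹ := by
      rw [Matrix.mul_sub, hACr, Matrix.add_mul, hAir]
      noncomm_ring
    calc A⁻¹ - (A + C)⁻¹ = (A + C)⁻¹ * ((A + C) * (A⁻¹ - (A + C)⁻¹)) := by
          rw [← Matrix.mul_assoc, hACl, Matrix.one_mul]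
      _ = (A + C)⁻¹ * (C * A⁻¹) := by rw [h3]
      _ = (A + C)⁻¹ * (C + C * A⁻¹ * C) * (A + C)⁻¹ := by rw [h1, h2]
  rw [key]
  have hmid : (C + C * A⁻¹ * C).PosSemidef := by
    have : (Cᴴ * A⁻¹ * C).PosSemidef := hA.inv.posSemidef.conjTranspose_mul_mul_same C
    rw [hC.isHermitian.eq] at this
    exact hC.add this
  have := hmid.mul_mul_conjTranspose_same (A + C)⁻¹
  rwa [hAC.inv.isHermitian.eq] at this

theorem trace_monotone_inv (n : ℕ) (A B C D X : Matrix (Fin n) (Fin n) ℂ)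
    (hA : A.PosDef) (hB : B.PosDef) (hC : C.PosSemidef) (hD : D.PosSemidef)
    (hX : X.IsHermitian) :
    0 ≤ Matrix.trace (X * A⁻¹ * X * B⁻¹) - Matrix.trace (X * (A + C)⁻¹ * X * (B + D)⁻¹) := by
  have hE : (A⁻¹ - (A + C)⁻¹).PosSemidef := inv_sub_inv_psd hA hC
  have hF : (B⁻¹ - (B + D)⁻¹).PosSemidef := inv_sub_inv_psd hB hD
  have split : X * A⁻¹ * X * B⁻¹ - X * (A + C)⁻¹ * X * (B + D)⁻¹
      = (X * (A⁻¹ - (A + C)⁻¹) * X) * B⁻¹ + (X * (A + C)⁻¹ * X) * (B⁻¹ - (B + D)⁻¹) := by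
    noncomm_ring
  have hXEX : (X * (A⁻¹ - (A + C)⁻¹) * X).PosSemidef := by
    have := hE.conjTranspose_mul_mul_same X
    rwa [hX.eq] at this
  have hXGX : (X * (A + C)⁻¹ * X).PosSemidef := by
    have := (hA.add_posSemidef hC).inv.posSemidef.conjTranspose_mul_mul_same X
    rwa [hX.eq] at this
  have h1 := trace_mul_nonneg hXEX hB.inv.posSemidef
  have h2 := trace_mul_nonneg hXGX hF
  calc (0 : ℂ) ≤ ((X * (A⁻¹ - (A + C)⁻¹) * X) * B⁻¹).trace
        + ((X * (A + C)⁻¹ * X) * (B⁻¹ - (B + D)⁻¹)).trace := add_nonneg h1 h2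
    _ = Matrix.trace (X * A⁻¹ * X * B⁻¹) - Matrix.trace (X * (A + C)⁻¹ * X * (B + D)⁻¹) := by
        rw [← Matrix.trace_add, ← split, Matrix.trace_sub]
end

section
/- For positive definite matrices A₁, B₁: Tr((A₁−B₁)(B₁⁻¹ − A₁⁻¹)) = Tr((A₁−B₁) B₁⁻¹ (A₁−B₁) A₁⁻¹), and this quantity is nonnegative. -/
open Matrix ComplexOrder

lemma posSemidef_trace_nonneg {m : Type*} [Fintype m] [DecidableEq m]
    {M : Matrix m m ℂ} (hM : M.PosSemidef) : 0 ≤ M.trace := by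
  rw [Matrix.trace]
  apply Finset.sum_nonneg
  intro i _
  have := hM.dotProduct_mulVec_nonneg (Pi.single i 1)
  simpa [dotProduct, Matrix.mulVec, Pi.single_apply, Matrix.diag] using this

theorem trace_K1_case (n : ℕ) (A₁ B₁ : Matrix (Fin n) (Fin n) ℂ)
    (hA : A₁.PosDef) (hB : B₁.PosDef) :
    Matrix.trace ((A₁ - B₁) * (B₁⁻¹ - A₁⁻¹)) =
      Matrix.trace ((A₁ - B₁) * B₁⁻¹ * (A₁ - B₁) * A₁⁻¹) ∧
    0 ≤ Matrix.trace ((A₁ - B₁) * (B₁⁻¹ - A₁⁻¹)) := by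
  have hAinv : A₁ * A₁⁻¹ = 1 := Matrix.mul_nonsing_inv _ (Matrix.isUnit_iff_isUnit_det _|>.1 hA.isUnit)
  have hBinv : B₁⁻¹ * B₁ = 1 := Matrix.nonsing_inv_mul _ (Matrix.isUnit_iff_isUnit_det _|>.1 hB.isUnit)
  have key : (A₁ - B₁) * B₁⁻¹ * (A₁ - B₁) * A₁⁻¹ = (A₁ - B₁) * (B₁⁻¹ - A₁⁻¹) := by
    have : (A₁ - B₁) * B₁⁻¹ * (A₁ - B₁) * A₁⁻¹
        = (A₁ - B₁) * (B₁⁻¹ * A₁ * A₁⁻¹) - (A₁ - B₁) * (B₁⁻¹ * B₁ * A₁⁻¹) := by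
      noncomm_ring
    rw [this, Matrix.mul_assoc B₁⁻¹ A₁ A₁⁻¹, hAinv, hBinv, Matrix.mul_one, Matrix.one_mul,
      Matrix.mul_sub]
  refine ⟨key.symm ▸ rfl, ?_⟩
  -- nonnegativity
  set C := A₁ - B₁ with hC
  have hCh : Cᴴ = C := by
    rw [hC, Matrix.conjTranspose_sub, hA.isHermitian.eq, hB.isHermitian.eq]
  have hBinvPSD : (B₁⁻¹).PosSemidef := hB.inv.posSemidef
  have hAinvPSD : (A₁⁻¹).PosSemidef := hA.inv.posSemidef
  open scoped MatrixOrder in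
  set S := CFC.sqrt (B₁⁻¹) with hS
  open scoped MatrixOrder in
  have hSmul : S * S = B₁⁻¹ := CFC.sqrt_mul_sqrt_self B₁⁻¹ hBinvPSD.nonneg
  open scoped MatrixOrder in
  have hSh : Sᴴ = S := (CFC.sqrt_nonneg B₁⁻¹).posSemidef.isHermitian.eq
  have hPSD : ((S * C) * A₁⁻¹ * (S * C)ᴴ).PosSemidef :=
    hAinvPSD.mul_mul_conjTranspose_same (S * C)
  have htr : Matrix.trace (C * B₁⁻¹ * C * A₁⁻¹)
      = Matrix.trace ((S * C) * A₁⁻¹ * (S * C)ᴴ) := by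
    rw [Matrix.conjTranspose_mul, hSh, hCh, ← hSmul]
    have h1 : C * (S * S) * C * A₁⁻¹ = (C * S) * (S * C * A₁⁻¹) := by noncomm_ring
    rw [h1, Matrix.trace_mul_comm]
  rw [← key, htr]
  exact posSemidef_trace_nonneg hPSD
end

section
/- Let K ≥ 1, let A₁, B₁ be positive definite matrices, and A_k, B_k for 2 ≤ k ≤ K positive semidefinite matrices. Then Tr( Σ_{k=1}^K (A_k − B_k) [ (Σ_{ℓ=1}^k B_ℓ)⁻¹ − (Σ_{ℓ=1}^k A_ℓ)⁻¹ ] ) ≥ 0. -/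
open Matrix ComplexOrder


variable {n : ℕ}

private lemma trace_nonneg_of_psd {P : Matrix (Fin n) (Fin n) ℂ} (hP : P.PosSemidef) :
    0 ≤ P.trace := by
  rw [Matrix.trace]
  refine Finset.sum_nonneg fun i _ => ?_
  have h := hP.2 (Finsupp.single i 1)
  simpa using h

open scoped MatrixOrder in
private lemma trace_mul_psd {P Q : Matrix (Fin n) (Fin n) ℂ}
    (hP : P.PosSemidef) (hQ : Q.PosSemidef) : 0 ≤ (P * Q).trace := by
  have h : P * Q = CFC.sqrt P * (CFC.sqrt P * Q) := by
    rw [← Matrix.mul_assoc, CFC.sqrt_mul_sqrt_self P hP.nonneg]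
  rw [h, Matrix.trace_mul_comm]
  have h2 := hQ.conjTranspose_mul_mul_same (CFC.sqrt P)
  rw [(CFC.sqrt_nonneg P).posSemidef.isHermitian.eq] at h2
  exact trace_nonneg_of_psd h2

private lemma trace_quad {E P Q : Matrix (Fin n) (Fin n) ℂ} (hE : E.IsHermitian)
    (hP : P.PosSemidef) (hQ : Q.PosSemidef) : 0 ≤ (E * P * E * Q).trace := by
  have h2 := hP.conjTranspose_mul_mul_same E
  rw [hE.eq] at h2
  exact trace_mul_psd h2 hQ

private lemma inv_sub_inv_psd_s7 {M N : Matrix (Fin n) (Fin n) ℂ} (hM : M.PosDef) (hN : N.PosDef)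
    (hMN : (N - M).PosSemidef) : (M⁻¹ - N⁻¹).PosSemidef := by
  have hMdet : IsUnit M.det := hM.det_pos.ne'.isUnit
  have hNdet : IsUnit N.det := hN.det_pos.ne'.isUnit
  have key : M⁻¹ - N⁻¹ =
      N⁻¹ * (N - M) * M⁻¹ * (N - M) * N⁻¹ + N⁻¹ * (N - M) * N⁻¹ := by
    simp only [Matrix.mul_sub, Matrix.sub_mul, Matrix.mul_assoc,
      Matrix.nonsing_inv_mul_cancel_left _ _ hMdet, Matrix.mul_nonsing_inv_cancel_left _ _ hMdet,
      Matrix.nonsing_inv_mul_cancel_left _ _ hNdet, Matrix.mul_nonsing_inv_cancel_left _ _ hNdet,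
      Matrix.nonsing_inv_mul _ hMdet, Matrix.mul_nonsing_inv _ hMdet,
      Matrix.nonsing_inv_mul _ hNdet, Matrix.mul_nonsing_inv _ hNdet,
      Matrix.mul_one, Matrix.one_mul]
    abel
  rw [key]
  have e1 : N⁻¹ * (N - M) * M⁻¹ * (N - M) * N⁻¹ = ((N - M) * N⁻¹)ᴴ * M⁻¹ * ((N - M) * N⁻¹) := by
    rw [Matrix.conjTranspose_mul, hMN.isHermitian.eq, hN.inv.isHermitian.eq]
    simp [Matrix.mul_assoc]
  have e2 : N⁻¹ * (N - M) * N⁻¹ = (N⁻¹)ᴴ * (N - M) * N⁻¹ := by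
    rw [hN.inv.isHermitian.eq]
  refine Matrix.PosSemidef.add ?_ ?_
  · rw [e1]; exact hM.inv.posSemidef.conjTranspose_mul_mul_same _
  · rw [e2]; exact hMN.conjTranspose_mul_mul_same _

private lemma quad_mono {E P P' Q Q' : Matrix (Fin n) (Fin n) ℂ} (hE : E.IsHermitian)
    (hP' : P'.PosSemidef) (hQ : Q.PosSemidef)
    (hPP : (P - P').PosSemidef) (hQQ : (Q - Q').PosSemidef) :
    (E * P' * E * Q').trace ≤ (E * P * E * Q).trace := by
  have h1 : 0 ≤ (E * (P - P') * E * Q).trace := trace_quad hE hPP hQ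
  have h2 : 0 ≤ (E * P' * E * (Q - Q')).trace := trace_quad hE hP' hQQ
  have expand : (E * P * E * Q).trace =
      (E * P' * E * Q').trace + (E * (P - P') * E * Q).trace + (E * P' * E * (Q - Q')).trace := by
    simp only [Matrix.mul_sub, Matrix.sub_mul, Matrix.trace_sub]
    ring
  rw [expand, add_assoc]
  exact le_add_of_nonneg_right (add_nonneg h1 h2)

private lemma inv_sub_inv_eq₁ {X Y : Matrix (Fin n) (Fin n) ℂ} (hX : X.PosDef) (hY : Y.PosDef) :
    Y⁻¹ - X⁻¹ = Y⁻¹ * (X - Y) * X⁻¹ := by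
  rw [Matrix.mul_sub, Matrix.nonsing_inv_mul _ hY.det_pos.ne'.isUnit, Matrix.sub_mul,
    Matrix.one_mul, Matrix.mul_assoc, Matrix.mul_nonsing_inv _ hX.det_pos.ne'.isUnit,
    Matrix.mul_one]

private lemma inv_sub_inv_eq₂ {X Y : Matrix (Fin n) (Fin n) ℂ} (hX : X.PosDef) (hY : Y.PosDef) :
    Y⁻¹ - X⁻¹ = X⁻¹ * (X - Y) * Y⁻¹ := by
  rw [Matrix.mul_sub, Matrix.nonsing_inv_mul _ hX.det_pos.ne'.isUnit, Matrix.sub_mul,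
    Matrix.one_mul, Matrix.mul_assoc, Matrix.mul_nonsing_inv _ hY.det_pos.ne'.isUnit,
    Matrix.mul_one]


theorem trace_inequality_general (n : ℕ) (K : ℕ) (hK : 1 ≤ K)
    (A B : ℕ → Matrix (Fin n) (Fin n) ℂ)
    (hA1 : (A 1).PosDef) (hB1 : (B 1).PosDef)
    (hA : ∀ k, 2 ≤ k → k ≤ K → (A k).PosSemidef)
    (hB : ∀ k, 2 ≤ k → k ≤ K → (B k).PosSemidef) :
    0 ≤ Matrix.trace (∑ k ∈ Finset.Icc 1 K, (A k - B k) *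
      ((∑ l ∈ Finset.Icc 1 k, B l)⁻¹ - (∑ l ∈ Finset.Icc 1 k, A l)⁻¹)) := by
  classical
  set X : ℕ → Matrix (Fin n) (Fin n) ℂ := fun k => ∑ l ∈ Finset.Icc 1 k, A l with hXdef
  set Y : ℕ → Matrix (Fin n) (Fin n) ℂ := fun k => ∑ l ∈ Finset.Icc 1 k, B l with hYdef
  have hXsucc : ∀ m, X (m + 1) = X m + A (m + 1) := fun m =>
    Finset.sum_Icc_succ_top (by omega) A
  have hYsucc : ∀ m, Y (m + 1) = Y m + B (m + 1) := fun m =>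
    Finset.sum_Icc_succ_top (by omega) B
  have hX1 : X 1 = A 1 := by simp [hXdef]
  have hY1 : Y 1 = B 1 := by simp [hYdef]
  have hXpd : ∀ m, 1 ≤ m → m ≤ K → (X m).PosDef := by
    intro m hm1 hmK
    induction m with
    | zero => omega
    | succ m ih =>
      by_cases hm : m = 0
      · subst hm; rw [show (0:ℕ)+1 = 1 from rfl, hX1]; exact hA1
      · rw [hXsucc]
        exact (ih (by omega) (by omega)).add_posSemidef (hA (m+1) (by omega) hmK)
  have hYpd : ∀ m, 1 ≤ m → m ≤ K → (Y m).PosDef := by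
    intro m hm1 hmK
    induction m with
    | zero => omega
    | succ m ih =>
      by_cases hm : m = 0
      · subst hm; rw [show (0:ℕ)+1 = 1 from rfl, hY1]; exact hB1
      · rw [hYsucc]
        exact (ih (by omega) (by omega)).add_posSemidef (hB (m+1) (by omega) hmK)
  -- the difference and the quadratic quantity
  set D : ℕ → Matrix (Fin n) (Fin n) ℂ := fun m => X m - Y m with hDdef
  have hDherm : ∀ m, 1 ≤ m → m ≤ K → (D m).IsHermitian := fun m h1 h2 =>
    ((hXpd m h1 h2).isHermitian).sub ((hYpd m h1 h2).isHermitian)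
  set q : ℕ → ℂ := fun m => (D m * (Y m)⁻¹ * (D m) * (X m)⁻¹).trace with hqdef
  set S : ℕ → ℂ :=
    fun m => ∑ k ∈ Finset.Icc 1 m, ((A k - B k) * ((Y k)⁻¹ - (X k)⁻¹)).trace with hSdef
  have hqnn : ∀ m, 1 ≤ m → m ≤ K → 0 ≤ q m := fun m h1 h2 =>
    trace_quad (hDherm m h1 h2) (hYpd m h1 h2).inv.posSemidef (hXpd m h1 h2).inv.posSemidef
  have main : ∀ m, 1 ≤ m → m ≤ K → q m ≤ 2 * S m := by
    intro m hm
    induction m, hm using Nat.le_induction with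
    | base =>
      intro h1K
      have hS1 : S 1 = q 1 := by
        rw [hSdef]
        simp only [Finset.Icc_self, Finset.sum_singleton]
        rw [show A 1 - B 1 = D 1 by rw [hDdef]; simp [hX1, hY1],
          inv_sub_inv_eq₁ (hXpd 1 le_rfl h1K) (hYpd 1 le_rfl h1K)]
        rw [hqdef, hDdef]
        simp only [Matrix.mul_assoc]
      rw [hS1, two_mul]
      exact le_add_of_nonneg_left (hqnn 1 le_rfl h1K)
    | succ m hm1 ih =>
      intro hmK
      have hmK' : m ≤ K := by omega
      have ihq := ih hmK'
      have hXpd' := hXpd (m+1) (by omega) hmK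
      have hYpd' := hYpd (m+1) (by omega) hmK
      have hXpdm := hXpd m hm1 hmK'
      have hYpdm := hYpd m hm1 hmK'
      have hApsd := hA (m+1) (by omega) hmK
      have hBpsd := hB (m+1) (by omega) hmK
      have hEdef : D (m+1) - D m = A (m+1) - B (m+1) := by
        rw [hDdef]; simp only [hXsucc, hYsucc]; abel
      have hEherm : (D (m+1) - D m).IsHermitian :=
        (hDherm (m+1) (by omega) hmK).sub (hDherm m hm1 hmK')
      -- the new term of S
      have hSsucc : S (m+1) = S m +
          ((A (m+1) - B (m+1)) * ((Y (m+1))⁻¹ - (X (m+1))⁻¹)).trace := by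
        rw [hSdef]; exact Finset.sum_Icc_succ_top (by omega) _
      set t : ℂ := ((A (m+1) - B (m+1)) * ((Y (m+1))⁻¹ - (X (m+1))⁻¹)).trace with htdef
      -- two expressions for t
      have ht1 : t = ((D (m+1) - D m) * ((Y (m+1))⁻¹ * (D (m+1)) * (X (m+1))⁻¹)).trace := by
        rw [htdef, hEdef, ← inv_sub_inv_eq₁ hXpd' hYpd']
      have ht2 : t = ((D (m+1) - D m) * ((X (m+1))⁻¹ * (D (m+1)) * (Y (m+1))⁻¹)).trace := by
        rw [htdef, hEdef, ← inv_sub_inv_eq₂ hXpd' hYpd']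
      -- cyclic trace identities
      have hcyc1 : (D (m+1) * ((X (m+1))⁻¹ * (D (m+1) * (Y (m+1))⁻¹))).trace
          = (D (m+1) * ((Y (m+1))⁻¹ * (D (m+1) * (X (m+1))⁻¹))).trace := by
        simpa only [Matrix.mul_assoc] using
          Matrix.trace_mul_comm (D (m+1) * (X (m+1))⁻¹) (D (m+1) * (Y (m+1))⁻¹)
      have hcyc2 : (D m * ((X (m+1))⁻¹ * (D (m+1) * (Y (m+1))⁻¹))).trace
          = (D (m+1) * ((Y (m+1))⁻¹ * (D m * (X (m+1))⁻¹))).trace := by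
        simpa only [Matrix.mul_assoc] using
          Matrix.trace_mul_comm (D m * (X (m+1))⁻¹) (D (m+1) * (Y (m+1))⁻¹)
      -- key algebraic identity
      have hkey : q (m+1) + ((D (m+1) - D m) * (Y (m+1))⁻¹ * (D (m+1) - D m) * (X (m+1))⁻¹).trace
          = (D m * (Y (m+1))⁻¹ * D m * (X (m+1))⁻¹).trace + (t + t) := by
        nth_rewrite 1 [ht1]
        rw [ht2]
        simp only [hqdef, Matrix.sub_mul, Matrix.mul_sub, Matrix.trace_sub, Matrix.mul_assoc]
        linear_combination hcyc2 - hcyc1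
      have hquad : 0 ≤ ((D (m+1) - D m) * (Y (m+1))⁻¹ * (D (m+1) - D m) * (X (m+1))⁻¹).trace :=
        trace_quad hEherm hYpd'.inv.posSemidef hXpd'.inv.posSemidef
      have hmono : (D m * (Y (m+1))⁻¹ * D m * (X (m+1))⁻¹).trace ≤ q m := by
        rw [hqdef]
        refine quad_mono (hDherm m hm1 hmK') hYpd'.inv.posSemidef hXpdm.inv.posSemidef
          (inv_sub_inv_psd_s7 hYpdm hYpd' ?_) (inv_sub_inv_psd_s7 hXpdm hXpd' ?_)
        · rw [hYsucc]; simpa using hBpsd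
        · rw [hXsucc]; simpa using hApsd
      calc q (m+1) ≤ q (m+1) + ((D (m+1) - D m) * (Y (m+1))⁻¹ * (D (m+1) - D m) * (X (m+1))⁻¹).trace :=
            le_add_of_nonneg_right hquad
        _ = (D m * (Y (m+1))⁻¹ * D m * (X (m+1))⁻¹).trace + (t + t) := hkey
        _ ≤ q m + (t + t) := by exact add_le_add_left hmono _
        _ ≤ 2 * S m + (t + t) := add_le_add_left ihq _
        _ = 2 * S (m+1) := by rw [hSsucc]; ring
  have hfin : 0 ≤ 2 * S K := le_trans (hqnn K hK le_rfl) (main K hK le_rfl)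
  have hSK : 0 ≤ S K := by
    rw [Complex.le_def] at hfin ⊢
    constructor
    · have := hfin.1; simp only [Complex.zero_re, Complex.mul_re] at *
      norm_num at this ⊢; linarith
    · have := hfin.2; simp only [Complex.zero_im, Complex.mul_im] at *
      norm_num at this ⊢; linarith
  rw [Matrix.trace_sum]
  exact hSK
end
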